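/- In the setting of the Hoffman-type bound, equality b = ρ₋/(1+ρ₋) holds if and only if P f_B = −ρ₋ f_B, where f_B = 1_B − b·1. -/

import Mathlib

open MeasureTheory
open scoped RealInnerProductSpace

/-- Inner product of two `1`-valued indicator functions in `L²` is the measure of the
intersection. -/
lemma inner_indicator_indicator {X : Type*} [MeasurableSpace X] (μ : Measure X)
    [IsFiniteMeasure μ] {s t : Set X} (hs : MeasurableSet s) (ht : MeasurableSet t) :
    ⟪indicatorConstLp 2 hs (measure_ne_top μ s) (1 : ℝ),
      indicatorConstLp 2 ht (measure_ne_top μ t) (1 : ℝ)⟫ = (μ (t ∩ s)).toReal := by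
  rw [L2.inner_indicatorConstLp_one,
    setIntegral_indicatorConstLp hs ht (measure_ne_top μ t), smul_eq_mul, mul_one]
  rfl

set_option maxHeartbeats 1600000 in
/-- Equality case in the Hoffman-type bound: `b = ρ₋/(1+ρ₋)` holds if and only
if `P f_B = −ρ₋ f_B`, where `f_B = 1_B − b·1`. -/
theorem hoffman_bound_equality
    {X : Type*} [MeasurableSpace X] (μ : Measure X) [IsProbabilityMeasure μ]
    (P : Lp ℝ 2 μ →L[ℝ] Lp ℝ 2 μ) (rm : ℝ) (hrm : 0 < rm)
    (one : Lp ℝ 2 μ)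
    (hone : one = indicatorConstLp 2 MeasurableSet.univ (measure_ne_top μ _) (1 : ℝ))
    (hP1 : P one = one)
    (hSA : ∀ f g : Lp ℝ 2 μ, ⟪P f, g⟫ = ⟪f, P g⟫)
    (hperp : ∀ f : Lp ℝ 2 μ, ⟪f, one⟫ = 0 → ⟪P f, one⟫ = 0)
    (hbot : ∀ f : Lp ℝ 2 μ, ⟪f, one⟫ = 0 → ⟪P f, f⟫ ≥ -rm * ‖f‖ ^ 2)
    (B : Set X) (hB : MeasurableSet B) (b : ℝ) (hb : (μ B).toReal = b)
    (hb0 : 0 < b) (hb1 : b < 1)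
    (hindep : ⟪P (indicatorConstLp 2 hB (measure_ne_top μ B) (1 : ℝ)),
        indicatorConstLp 2 hB (measure_ne_top μ B) (1 : ℝ)⟫ = 0) :
    b = rm / (1 + rm) ↔
      P (indicatorConstLp 2 hB (measure_ne_top μ B) (1 : ℝ) - b • one) =
        (-rm) • (indicatorConstLp 2 hB (measure_ne_top μ B) (1 : ℝ) - b • one) := by
  set χ := indicatorConstLp 2 hB (measure_ne_top μ B) (1 : ℝ) with hχdef
  have h1rm : (0:ℝ) < 1 + rm := by linarith
  -- basic inner products
  have hχχ : ⟪χ, χ⟫ = b := by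
    rw [hχdef, inner_indicator_indicator μ hB hB, Set.inter_self, hb]
  have hχ1 : ⟪χ, one⟫ = b := by
    rw [hχdef, hone, inner_indicator_indicator μ hB MeasurableSet.univ,
      Set.univ_inter, hb]
  have h1χ : ⟪one, χ⟫ = b := by rw [real_inner_comm]; exact hχ1
  have h11 : ⟪one, one⟫ = 1 := by
    rw [hone, inner_indicator_indicator μ MeasurableSet.univ MeasurableSet.univ,
      Set.univ_inter]
    simp
  set f := χ - b • one with hfdef
  have hf1 : ⟪f, one⟫ = 0 := by
    rw [hfdef, inner_sub_left, real_inner_smul_left, hχ1, h11]; ring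
  have hff : ⟪f, f⟫ = b - b ^ 2 := by
    rw [hfdef]
    simp only [inner_sub_left, inner_sub_right, real_inner_smul_left,
      real_inner_smul_right, hχχ, hχ1, h1χ, h11]
    ring
  have hPf : P f = P χ - b • one := by
    rw [hfdef, map_sub, _root_.map_smul, hP1]
  have hPχ1 : ⟪P χ, one⟫ = b := by rw [hSA, hP1, hχ1]
  have hPff : ⟪P f, f⟫ = -b ^ 2 := by
    rw [hPf, hfdef]
    simp only [inner_sub_left, inner_sub_right, real_inner_smul_left,
      real_inner_smul_right, hindep, hPχ1, h1χ, h11]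
    ring
  constructor
  · -- equality of the bound implies eigenfunction
    intro heq
    have hb' : b * (1 + rm) = rm := by
      rw [heq]; field_simp
    have hQff : ⟪P f, f⟫ + rm * ⟪f, f⟫ = 0 := by
      rw [hPff, hff]; linear_combination (-b) * hb'
    -- Q f h = 0 for every h ⊥ one
    have key : ∀ h : Lp ℝ 2 μ, ⟪h, one⟫ = 0 → ⟪P f, h⟫ + rm * ⟪f, h⟫ = 0 := by
      intro h hh
      have hsym : ⟪P h, f⟫ + rm * ⟪h, f⟫ = ⟪P f, h⟫ + rm * ⟪f, h⟫ := by
        rw [hSA h f, real_inner_comm h (P f), real_inner_comm h f]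
      have hd0 : 0 ≤ ⟪P h, h⟫ + rm * ⟪h, h⟫ := by
        have h1 := hbot h hh
        have h2 : ⟪h, h⟫ = ‖h‖ ^ 2 := real_inner_self_eq_norm_sq h
        rw [h2]; nlinarith
      have quad : ∀ t : ℝ, 0 ≤ 2 * t * (⟪P f, h⟫ + rm * ⟪f, h⟫)
          + t ^ 2 * (⟪P h, h⟫ + rm * ⟪h, h⟫) := by
        intro t
        have hperp' : ⟪f + t • h, one⟫ = 0 := by
          rw [inner_add_left, real_inner_smul_left, hf1, hh]; ring
        have h1 := hbot (f + t • h) hperp'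
        have h2 : ⟪f + t • h, f + t • h⟫ = ‖f + t • h‖ ^ 2 :=
          real_inner_self_eq_norm_sq _
        rw [← h2] at h1
        have e1 : ⟪P (f + t • h), f + t • h⟫ + rm * ⟪f + t • h, f + t • h⟫
            = 2 * t * (⟪P f, h⟫ + rm * ⟪f, h⟫)
              + t ^ 2 * (⟪P h, h⟫ + rm * ⟪h, h⟫) := by
          rw [map_add, _root_.map_smul]
          simp only [inner_add_left, inner_add_right, real_inner_smul_left,
            real_inner_smul_right]
          linear_combination hQff + t * hsym
        linarith [e1, h1]
      obtain ⟨c, hc⟩ : ∃ c : ℝ, c = ⟪P f, h⟫ + rm * ⟪f, h⟫ := ⟨_, rfl⟩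
      obtain ⟨d, hd⟩ : ∃ d : ℝ, d = ⟪P h, h⟫ + rm * ⟪h, h⟫ := ⟨_, rfl⟩
      simp only [← hc, ← hd] at quad hd0 ⊢
      have hcsq : c ^ 2 = 0 := by
        refine le_antisymm ?_ (sq_nonneg c)
        rcases eq_or_lt_of_le hd0 with hdz | hdp
        · have h1 := quad (-c)
          rw [← hdz] at h1
          nlinarith
        · have h1 := quad (-c / d)
          have h2 : 2 * (-c / d) * c + (-c / d) ^ 2 * d = -(c ^ 2) / d := by
            field_simp; ring
          rw [h2] at h1
          have h3 := mul_nonneg h1 hdp.le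
          rw [div_mul_cancel₀ _ (ne_of_gt hdp)] at h3
          linarith
      exact pow_eq_zero_iff (two_ne_zero) |>.mp hcsq
    -- apply key to g := P f + rm • f
    have hgperp : ⟪P f + rm • f, one⟫ = 0 := by
      rw [inner_add_left, real_inner_smul_left, hperp f hf1, hf1]; ring
    have hgg : ⟪P f + rm • f, P f + rm • f⟫ = 0 := by
      have h1 := key (P f + rm • f) hgperp
      rw [inner_add_left, real_inner_smul_left]
      exact h1
    have hg0 : P f + rm • f = 0 := by rwa [inner_self_eq_zero] at hgg
    have : P f = -(rm • f) := by rw [eq_neg_iff_add_eq_zero]; exact hg0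
    rw [this, neg_smul]
  · -- eigenfunction implies equality of the bound
    intro heig
    have h1 : (-b ^ 2 : ℝ) = -rm * (b - b ^ 2) := by
      rw [← hPff, heig, real_inner_smul_left, hff]
    rw [eq_div_iff (ne_of_gt h1rm)]
    have hbb : b * (b * (1 + rm) - rm) = 0 := by nlinarith
    rcases mul_eq_zero.mp hbb with h | h
    · exact absurd h (ne_of_gt hb0)
    · linarith
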